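/- For every x > 0, the function F1(x) = exp(-x^2)/erfc(x) is strictly increasing, with F1(0) = 1 and F1(x) → +∞ as x → +∞. -/

import Mathlib

open Real Filter Topology Set MeasureTheory

noncomputable def erf (x : ℝ) : ℝ := (2 / Real.sqrt Real.pi) * ∫ u in (0:ℝ)..x, Real.exp (-u^2)

noncomputable def erfc (x : ℝ) : ℝ := 1 - erf x

noncomputable def F1 (x : ℝ) : ℝ := Real.exp (-x^2) / erfc x

lemma gauss_integrableOn (x : ℝ) :
    IntegrableOn (fun u : ℝ => Real.exp (-u^2)) (Set.Ioi x) := by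
  have := integrable_exp_neg_mul_sq (b := 1) one_pos
  simpa using this.integrableOn

lemma gauss_integral_Ioi_zero :
    ∫ u in Set.Ioi (0:ℝ), Real.exp (-u^2) = Real.sqrt Real.pi / 2 := by
  have := integral_gaussian_Ioi 1
  simpa using this

lemma mul_gauss_integral_Ioi (x : ℝ) :
    ∫ u in Set.Ioi x, u * Real.exp (-u^2) = Real.exp (-x^2) / 2 := by
  have hderiv : ∀ y ∈ Set.Ici x,
      HasDerivAt (fun u : ℝ => -Real.exp (-u^2) / 2) (y * Real.exp (-y^2)) y := by
    intro y _
    have h1 : HasDerivAt (fun u : ℝ => -u^2) (-(2*y)) y := by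
      simpa using (hasDerivAt_pow 2 y).fun_neg
    have h2 : HasDerivAt (fun u : ℝ => Real.exp (-u^2)) (Real.exp (-y^2) * -(2*y)) y :=
      h1.exp
    have h3 := (h2.neg).div_const 2
    refine h3.congr_deriv ?_
    ring
  have hint : IntegrableOn (fun u : ℝ => u * Real.exp (-u^2)) (Set.Ioi x) := by
    have := integrable_mul_exp_neg_mul_sq (b := 1) one_pos
    simpa using this.integrableOn
  have htend : Tendsto (fun u : ℝ => -Real.exp (-u^2) / 2) atTop (nhds 0) := by
    have h0 : Tendsto (fun u : ℝ => -u^2) atTop atBot :=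
      tendsto_neg_atTop_atBot.comp (tendsto_pow_atTop (n := 2) (by norm_num))
    have := (Real.tendsto_exp_atBot.comp h0).neg.div_const 2
    simpa using this
  have := integral_Ioi_of_hasDerivAt_of_tendsto
    ((hderiv x (Set.self_mem_Ici)).continuousAt.continuousWithinAt)
    (fun y hy => hderiv y (Set.mem_Ici.mpr hy.le)) hint htend
  rw [this]
  ring

lemma erfc_eq_integral {x : ℝ} (hx : 0 ≤ x) :
    erfc x = (2 / Real.sqrt Real.pi) * ∫ u in Set.Ioi x, Real.exp (-u^2) := by
  have hsplit : (∫ u in Set.Ioi (0:ℝ), Real.exp (-u^2))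
      = (∫ u in Set.Ioc 0 x, Real.exp (-u^2)) + ∫ u in Set.Ioi x, Real.exp (-u^2) := by
    rw [← setIntegral_union (Set.Ioc_disjoint_Ioi le_rfl) measurableSet_Ioi
      ((gauss_integrableOn 0).mono_set Set.Ioc_subset_Ioi_self) (gauss_integrableOn x),
      Set.Ioc_union_Ioi_eq_Ioi hx]
  have hiv : (∫ u in (0:ℝ)..x, Real.exp (-u^2)) = ∫ u in Set.Ioc 0 x, Real.exp (-u^2) :=
    intervalIntegral.integral_of_le hx
  have hπ : Real.sqrt Real.pi ≠ 0 := by positivity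
  rw [erfc, erf, hiv]
  have : (∫ u in Set.Ioc 0 x, Real.exp (-u^2))
      = Real.sqrt Real.pi / 2 - ∫ u in Set.Ioi x, Real.exp (-u^2) := by
    rw [← gauss_integral_Ioi_zero, hsplit]; ring
  rw [this]
  field_simp
  ring

lemma gauss_integral_Ioi_pos (x : ℝ) : 0 < ∫ u in Set.Ioi x, Real.exp (-u^2) := by
  rw [setIntegral_pos_iff_support_of_nonneg_ae]
  · have : (Function.support fun u : ℝ => Real.exp (-u^2)) = Set.univ := by
      ext u; simp [Function.support, (Real.exp_pos _).ne']
    rw [this, Set.univ_inter]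
    simp [Real.volume_Ioi]
  · exact Filter.Eventually.of_forall (fun u => (Real.exp_pos _).le)
  · exact gauss_integrableOn x

lemma erfc_pos {x : ℝ} (hx : 0 ≤ x) : 0 < erfc x := by
  rw [erfc_eq_integral hx]
  have h1 : (0:ℝ) < 2 / Real.sqrt Real.pi := by positivity
  exact mul_pos h1 (gauss_integral_Ioi_pos x)

lemma key_lt {x : ℝ} (hx : 0 < x) :
    2 * x * (∫ u in Set.Ioi x, Real.exp (-u^2)) < Real.exp (-x^2) := by
  have hint1 : IntegrableOn (fun u : ℝ => Real.exp (-u^2)) (Set.Ioi x) := gauss_integrableOn x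
  have hint2 : IntegrableOn (fun u : ℝ => (u / x) * Real.exp (-u^2)) (Set.Ioi x) := by
    have h : IntegrableOn (fun u : ℝ => u * Real.exp (-1 * u^2) / x) (Set.Ioi x) :=
      ((integrable_mul_exp_neg_mul_sq (b := 1) one_pos).integrableOn).div_const x
    refine h.congr_fun (fun u _ => ?_) measurableSet_Ioi
    simp only [neg_mul, one_mul]
    ring
  have hlt : (∫ u in Set.Ioi x, Real.exp (-u^2))
      < ∫ u in Set.Ioi x, (u / x) * Real.exp (-u^2) := by
    have hsub : 0 < ∫ u in Set.Ioi x, ((u / x) * Real.exp (-u^2) - Real.exp (-u^2)) := by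
      rw [setIntegral_pos_iff_support_of_nonneg_ae]
      · have hss : Set.Ioi x ⊆ (Function.support fun u : ℝ =>
            (u / x) * Real.exp (-u^2) - Real.exp (-u^2)) ∩ Set.Ioi x := by
          intro u hu
          refine ⟨?_, hu⟩
          have hux : x < u := hu
          have h1 : (1:ℝ) < u / x := (one_lt_div hx).mpr hux
          have : 0 < (u / x) * Real.exp (-u^2) - Real.exp (-u^2) := by
            have := Real.exp_pos (-u^2)
            nlinarith
          simp [Function.support, this.ne']
        refine lt_of_lt_of_le ?_ (measure_mono hss)
        simp [Real.volume_Ioi]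
      · filter_upwards [ae_restrict_mem measurableSet_Ioi] with u hu
        simp only [Pi.zero_apply]
        have hux : x < u := hu
        have h1 : (1:ℝ) ≤ u / x := ((one_lt_div hx).mpr hux).le
        have := (Real.exp_pos (-u^2)).le
        nlinarith
      · exact hint2.sub hint1
    have := integral_sub hint2 hint1
    rw [this] at hsub
    linarith
  have heq : ∫ u in Set.Ioi x, (u / x) * Real.exp (-u^2)
      = Real.exp (-x^2) / (2 * x) := by
    have : ∀ u : ℝ, (u / x) * Real.exp (-u^2) = (u * Real.exp (-u^2)) / x := by
      intro u; ring
    simp_rw [this]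
    rw [integral_div, mul_gauss_integral_Ioi x]
    field_simp
  rw [heq] at hlt
  rw [lt_div_iff₀ (by positivity)] at hlt
  linarith [hlt]

lemma hasDerivAt_erf (x : ℝ) :
    HasDerivAt erf ((2 / Real.sqrt Real.pi) * Real.exp (-x^2)) x := by
  have hcont : Continuous fun u : ℝ => Real.exp (-u^2) := by
    continuity
  have h : HasDerivAt (fun y : ℝ => ∫ u in (0:ℝ)..y, Real.exp (-u^2)) (Real.exp (-x^2)) x := by
    refine intervalIntegral.integral_hasDerivAt_right ?_ ?_ hcont.continuousAt
    · exact (hcont.intervalIntegrable 0 x)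
    · exact hcont.stronglyMeasurableAtFilter _ _
  exact h.const_mul _

lemma continuous_erfc : Continuous erfc := by
  have : Continuous erf :=
    continuous_iff_continuousAt.mpr fun x => (hasDerivAt_erf x).continuousAt
  exact continuous_const.sub this

lemma hasDerivAt_F1 {x : ℝ} (hx : 0 < x) :
    HasDerivAt F1 ((Real.exp (-x^2) * ((2 / Real.sqrt Real.pi) * Real.exp (-x^2)
      - 2 * x * erfc x)) / (erfc x)^2) x := by
  have h1 : HasDerivAt (fun u : ℝ => -u^2) (-(2*x)) x := by
    simpa using (hasDerivAt_pow 2 x).fun_neg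
  have h2 : HasDerivAt (fun u : ℝ => Real.exp (-u^2)) (Real.exp (-x^2) * -(2*x)) x := h1.exp
  have h3 : HasDerivAt erfc (-((2 / Real.sqrt Real.pi) * Real.exp (-x^2))) x :=
    (hasDerivAt_erf x).const_sub 1
  have h4 := h2.div h3 (erfc_pos hx.le).ne'
  refine h4.congr_deriv ?_
  ring

lemma F1_lower {x : ℝ} (hx : 0 < x) : Real.sqrt Real.pi * x < F1 x := by
  have hπ : (0:ℝ) < Real.sqrt Real.pi := by positivity
  have herfc := erfc_pos hx.le
  rw [F1, lt_div_iff₀ herfc]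
  have := key_lt hx
  rw [erfc_eq_integral hx.le]
  have hπ' : Real.sqrt Real.pi ≠ 0 := hπ.ne'
  calc Real.sqrt Real.pi * x * ((2 / Real.sqrt Real.pi) * ∫ u in Set.Ioi x, Real.exp (-u^2))
      = 2 * x * (∫ u in Set.Ioi x, Real.exp (-u^2)) := by field_simp
    _ < Real.exp (-x^2) := this

theorem F1_strictMono_and_limits :
    StrictMonoOn F1 (Set.Ioi 0) ∧ F1 0 = 1 ∧ Tendsto F1 atTop atTop := by
  refine ⟨?_, ?_, ?_⟩
  · apply strictMonoOn_of_deriv_pos (convex_Ioi 0)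
    · apply ContinuousOn.div
      · exact (Continuous.rexp (by continuity)).continuousOn
      · exact continuous_erfc.continuousOn
      · intro x hx
        exact (erfc_pos (le_of_lt hx)).ne'
    · intro x hx
      rw [interior_Ioi] at hx
      rw [(hasDerivAt_F1 hx).deriv]
      have h1 : 0 < (2 / Real.sqrt Real.pi) * Real.exp (-x^2) - 2 * x * erfc x := by
        have hkey := key_lt hx
        rw [erfc_eq_integral hx.le]
        have hπ : Real.sqrt Real.pi ≠ 0 := by positivity
        have : 2 * x * ((2 / Real.sqrt Real.pi) * ∫ u in Set.Ioi x, Real.exp (-u^2))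
            = (2 / Real.sqrt Real.pi) * (2 * x * ∫ u in Set.Ioi x, Real.exp (-u^2)) := by ring
        rw [this]
        have h2 : (0:ℝ) < 2 / Real.sqrt Real.pi := by positivity
        nlinarith [Real.exp_pos (-x^2)]
      have h2 := Real.exp_pos (-x^2)
      have h3 := erfc_pos hx.le
      positivity
  · simp [F1, erfc, erf, intervalIntegral.integral_same]
  · apply tendsto_atTop_mono' atTop
      (Filter.eventually_atTop.mpr ⟨1, fun x hx => (F1_lower (by linarith)).le⟩)
    exact Tendsto.const_mul_atTop (by positivity) tendsto_id
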